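/- Main theorem, (d) ⇒ (a), monoidal case: Let C be a monoidal category such that the identity functor of C admits a unital magma structure (μ, η), and suppose that for all objects A, B the triangle condition holds: ((ρ_A).inv ⊗ (λ_B).inv) ≫ ((A ◁ η_B) ⊗ (η_A ▷ B)) ≫ μ_{A⊗B} = 𝟙_{A⊗B}. Then C is cocartesian: 𝟙_C is an initial object, and for all A, B the cospan A —ι₁→ A ⊗ B ←ι₂— B, with ι₁ := (ρ_A).inv ≫ (A ◁ η_B) and ι₂ := (λ_B).inv ≫ (η_A ▷ B), is a binary coproduct of A and B; in particular C has all finite coproducts. -/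

import Mathlib

open CategoryTheory CategoryTheory.Limits CategoryTheory.MonoidalCategory

/-- A unital magma structure on the identity functor of a monoidal category: natural
families `μ_A : A ⊗ A ⟶ A` and `η_A : 𝟙_C ⟶ A` satisfying the two unit laws. -/
structure IdMagma (C : Type*) [Category C] [MonoidalCategory C] where
  μ : ∀ A : C, A ⊗ A ⟶ A
  η : ∀ A : C, 𝟙_ C ⟶ A
  μ_natural : ∀ {A B : C} (f : A ⟶ B), (f ⊗ₘ f) ≫ μ B = μ A ≫ f
  η_natural : ∀ {A B : C} (f : A ⟶ B), η A ≫ f = η B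
  left_unit : ∀ A : C, (λ_ A).inv ≫ (η A ▷ A) ≫ μ A = 𝟙 A
  right_unit : ∀ A : C, (ρ_ A).inv ≫ (A ◁ η A) ≫ μ A = 𝟙 A

section Aux
variable {C : Type*} [Category C] [MonoidalCategory C] (m : IdMagma C)

lemma IdMagma.inl_desc {A B X : C} (f : A ⟶ X) (g : B ⟶ X) :
    ((ρ_ A).inv ≫ (A ◁ m.η B)) ≫ (f ⊗ₘ g) ≫ m.μ X = f := by
  have h1 : (A ◁ m.η B) ≫ (f ⊗ₘ g) = (f ▷ 𝟙_ C) ≫ (X ◁ m.η X) := by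
    simp only [← id_tensorHom, ← tensorHom_id, tensorHom_comp_tensorHom, Category.id_comp,
      Category.comp_id, m.η_natural]
  rw [Category.assoc, reassoc_of% h1]
  have h2 : (ρ_ A).inv ≫ (f ▷ 𝟙_ C) = f ≫ (ρ_ X).inv := by simp
  rw [reassoc_of% h2, m.right_unit, Category.comp_id]

lemma IdMagma.inr_desc {A B X : C} (f : A ⟶ X) (g : B ⟶ X) :
    ((λ_ B).inv ≫ (m.η A ▷ B)) ≫ (f ⊗ₘ g) ≫ m.μ X = g := by
  have h1 : (m.η A ▷ B) ≫ (f ⊗ₘ g) = (𝟙_ C ◁ g) ≫ (m.η X ▷ X) := by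
    simp only [← id_tensorHom, ← tensorHom_id, tensorHom_comp_tensorHom, Category.id_comp,
      Category.comp_id, m.η_natural]
  rw [Category.assoc, reassoc_of% h1]
  have h2 : (λ_ B).inv ≫ (𝟙_ C ◁ g) = g ≫ (λ_ X).inv := by simp
  rw [reassoc_of% h2, m.left_unit, Category.comp_id]

lemma IdMagma.desc_uniq {A B X : C}
    (h : ((ρ_ A).inv ⊗ₘ (λ_ B).inv) ≫ ((A ◁ m.η B) ⊗ₘ (m.η A ▷ B)) ≫ m.μ (A ⊗ B) =
        𝟙 (A ⊗ B))
    (t : A ⊗ B ⟶ X) :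
    ((((ρ_ A).inv ≫ (A ◁ m.η B)) ≫ t) ⊗ₘ (((λ_ B).inv ≫ (m.η A ▷ B)) ≫ t)) ≫ m.μ X = t := by
  rw [← tensorHom_comp_tensorHom, ← tensorHom_comp_tensorHom, Category.assoc, Category.assoc, m.μ_natural]
  simp only [← Category.assoc]
  simp only [Category.assoc] at h ⊢
  rw [reassoc_of% h]

lemma IdMagma.eta_unit
    (h : ((ρ_ (𝟙_ C)).inv ⊗ₘ (λ_ (𝟙_ C)).inv) ≫
        ((𝟙_ C ◁ m.η (𝟙_ C)) ⊗ₘ (m.η (𝟙_ C) ▷ 𝟙_ C)) ≫ m.μ (𝟙_ C ⊗ 𝟙_ C) =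
        𝟙 (𝟙_ C ⊗ 𝟙_ C)) : m.η (𝟙_ C) = 𝟙 (𝟙_ C) := by
  have l1 : ((ρ_ (𝟙_ C)).inv ≫ (𝟙_ C ◁ m.η (𝟙_ C))) ≫ (λ_ (𝟙_ C)).hom = m.η (𝟙_ C) := by
    rw [Category.assoc, leftUnitor_naturality, ← Category.assoc, unitors_equal,
      Iso.inv_hom_id, Category.id_comp]
  have l2 : ((λ_ (𝟙_ C)).inv ≫ (m.η (𝟙_ C) ▷ 𝟙_ C)) ≫ (λ_ (𝟙_ C)).hom = m.η (𝟙_ C) := by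
    rw [Category.assoc, unitors_equal, rightUnitor_naturality, ← Category.assoc,
      ← unitors_equal, Iso.inv_hom_id, Category.id_comp]
  have r1 : ((ρ_ (𝟙_ C)).inv ≫ (𝟙_ C ◁ m.η (𝟙_ C))) ≫ m.μ (𝟙_ C) ≫ m.η (𝟙_ C)
      = m.η (𝟙_ C) := by
    simp only [Category.assoc]
    rw [reassoc_of% (m.right_unit (𝟙_ C))]
  have r2 : ((λ_ (𝟙_ C)).inv ≫ (m.η (𝟙_ C) ▷ 𝟙_ C)) ≫ m.μ (𝟙_ C) ≫ m.η (𝟙_ C)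
      = m.η (𝟙_ C) := by
    simp only [Category.assoc]
    rw [reassoc_of% (m.left_unit (𝟙_ C))]
  have e1 := m.desc_uniq h ((λ_ (𝟙_ C)).hom)
  have e2 := m.desc_uniq h (m.μ (𝟙_ C) ≫ m.η (𝟙_ C))
  rw [l1, l2] at e1
  rw [r1, r2] at e2
  have key : (λ_ (𝟙_ C)).hom = m.μ (𝟙_ C) ≫ m.η (𝟙_ C) := by rw [← e1]; exact e2
  have sep : ((λ_ (𝟙_ C)).inv ≫ m.μ (𝟙_ C)) ≫ m.η (𝟙_ C) = 𝟙 (𝟙_ C) := by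
    rw [Category.assoc, ← key, Iso.inv_hom_id]
  have idem : m.η (𝟙_ C) ≫ m.η (𝟙_ C) = m.η (𝟙_ C) := m.η_natural (m.η (𝟙_ C))
  calc m.η (𝟙_ C) = (((λ_ (𝟙_ C)).inv ≫ m.μ (𝟙_ C)) ≫ m.η (𝟙_ C)) ≫ m.η (𝟙_ C) := by
        rw [sep, Category.id_comp]
    _ = ((λ_ (𝟙_ C)).inv ≫ m.μ (𝟙_ C)) ≫ m.η (𝟙_ C) := by rw [Category.assoc, idem]
    _ = 𝟙 (𝟙_ C) := sep

end Aux

/-- Main theorem, (d) ⇒ (a): if the identity functor admits a unital magma structure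
satisfying the triangle condition, then the monoidal category is cocartesian: the unit is
initial, the canonical cospans are binary coproducts, and the category has all finite
coproducts. -/
theorem cocartesian_of_idMagma_triangle {C : Type*} [Category C] [MonoidalCategory C]
    (m : IdMagma C)
    (h : ∀ A B : C,
      ((ρ_ A).inv ⊗ₘ (λ_ B).inv) ≫ ((A ◁ m.η B) ⊗ₘ (m.η A ▷ B)) ≫ m.μ (A ⊗ B) =
        𝟙 (A ⊗ B)) :
    Nonempty (IsInitial (𝟙_ C)) ∧
    (∀ A B : C, Nonempty (IsColimit (BinaryCofan.mk
        ((ρ_ A).inv ≫ (A ◁ m.η B)) ((λ_ B).inv ≫ (m.η A ▷ B))))) ∧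
    HasFiniteCoproducts C := by
  have hinit : IsInitial (𝟙_ C) :=
    IsInitial.ofUniqueHom (fun A => m.η A) (fun A f => by
      show f = m.η A
      rw [← m.η_natural f, m.eta_unit (h (𝟙_ C) (𝟙_ C)), Category.id_comp])
  have hcolim : ∀ A B : C, IsColimit (BinaryCofan.mk
      ((ρ_ A).inv ≫ (A ◁ m.η B)) ((λ_ B).inv ≫ (m.η A ▷ B))) := fun A B =>
    BinaryCofan.isColimitMk
      (fun s => (s.inl ⊗ₘ s.inr) ≫ m.μ s.pt)
      (fun s => m.inl_desc s.inl s.inr)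
      (fun s => m.inr_desc s.inl s.inr)
      (fun s t ht1 ht2 => by
        rw [← m.desc_uniq (h A B) t]
        rw [ht1, ht2])
  refine ⟨⟨hinit⟩, fun A B => ⟨hcolim A B⟩, ?_⟩
  have : HasInitial C := hinit.hasInitial
  have : ∀ A B : C, HasColimit (pair A B) := fun A B => HasColimit.mk ⟨_, hcolim A B⟩
  have : HasBinaryCoproducts C := { has_colimit := fun F => hasColimit_of_iso (diagramIsoPair F) }
  exact hasFiniteCoproducts_of_has_binary_and_initial
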